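/- arXiv:2210.06848 — 5 statements merged into one kernel-verified Lean document; each statement's English description precedes it below -/
import Mathlib

section
/- Let X be a compact uniform space and f_{0,∞} a sequence of continuous self-maps of X. Then for every n ≥ 1, the topological entropy of the n-th iterate system satisfies h(f_{0,∞}^n) ≤ n · h(f_{0,∞}), where f_{0,∞}^n = {f_{kn}^n}_{k≥0} with f_{kn}^n = f_{kn+n−1} ∘ ⋯ ∘ f_{kn}. -/
open Filter Set
open scoped Uniformity

/-- `itr f i n = f (i+n-1) ∘ ⋯ ∘ f i`, the composition of `n` maps of the sequence `f`
starting at index `i` (so `itr f i 0 = id`). -/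
def itr {X : Type*} (f : ℕ → X → X) (i : ℕ) : ℕ → X → X
  | 0 => id
  | n + 1 => fun x => f (i + n) (itr f i n x)

/-- `E` is an `(n,γ)`-separated set for the nonautonomous system `f`. -/
def IsSep {X : Type*} (f : ℕ → X → X) (n : ℕ) (γ : Set (X × X)) (E : Set X) : Prop :=
  ∀ x ∈ E, ∀ y ∈ E, x ≠ y → ∃ j < n, (itr f 0 j x, itr f 0 j y) ∉ γ

/-- `F` `(n,γ)`-spans the set `K` for the nonautonomous system `f`. -/
def Spans {X : Type*} (f : ℕ → X → X) (n : ℕ) (γ : Set (X × X)) (F K : Set X) : Prop :=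
  ∀ x ∈ K, ∃ y ∈ F, ∀ j < n, (itr f 0 j x, itr f 0 j y) ∈ γ

/-- Maximal cardinality of an `(n,γ)`-separated subset of `Λ`. -/
noncomputable def sepCard {X : Type*} (f : ℕ → X → X) (Λ : Set X) (n : ℕ)
    (γ : Set (X × X)) : ℕ :=
  sSup {m | ∃ E : Finset X, ↑E ⊆ Λ ∧ IsSep f n γ ↑E ∧ E.card = m}

/-- Minimal cardinality of a subset of `Λ` that `(n,γ)`-spans `Λ`. -/
noncomputable def spanCard {X : Type*} (f : ℕ → X → X) (Λ : Set X) (n : ℕ)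
    (γ : Set (X × X)) : ℕ :=
  sInf {m | ∃ F : Finset X, ↑F ⊆ Λ ∧ Spans f n γ ↑F Λ ∧ F.card = m}


/-- Topological entropy of the nonautonomous system `f` on the set `Λ`, defined via
separated sets; by antitonicity in the entourage, the supremum over all entourages agrees
with the limit along the net of symmetric open entourages used in the paper. -/
noncomputable def entropy {X : Type*} [UniformSpace X] (f : ℕ → X → X) (Λ : Set X) : EReal :=
  ⨆ γ ∈ 𝓤 X, atTop.limsup fun n : ℕ =>
    ((Real.log (sepCard f Λ n γ) / n : ℝ) : EReal)

/-! ### Auxiliary lemmas -/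

lemma itr_add {X : Type*} (f : ℕ → X → X) (a b : ℕ) (x : X) :
    itr f 0 (a + b) x = itr f a b (itr f 0 a x) := by
  induction b with
  | zero => rfl
  | succ b ih =>
      show f (0 + (a + b)) (itr f 0 (a + b) x) = f (a + b) (itr f a b (itr f 0 a x))
      rw [ih, Nat.zero_add]

lemma itr_iterate {X : Type*} (f : ℕ → X → X) (n : ℕ) (j : ℕ) (x : X) :
    itr (fun k => itr f (k * n) n) 0 j x = itr f 0 (j * n) x := by
  induction j with
  | zero => rw [Nat.zero_mul]; rfl
  | succ j ih =>
      show itr f ((0 + j) * n) n (itr (fun k => itr f (k * n) n) 0 j x) = itr f 0 ((j + 1) * n) x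
      rw [Nat.zero_add, ih, Nat.succ_mul]
      exact (itr_add f (j * n) n x).symm

lemma isSep_of_isSep_iterate {X : Type*} (f : ℕ → X → X) {n : ℕ} (hn : 1 ≤ n) (m : ℕ)
    (γ : Set (X × X)) (E : Set X)
    (h : IsSep (fun k => itr f (k * n) n) m γ E) : IsSep f (m * n) γ E := by
  intro x hx y hy hxy
  obtain ⟨j, hj, hj2⟩ := h x hx y hy hxy
  refine ⟨j * n, Nat.mul_lt_mul_of_lt_of_le hj le_rfl hn, ?_⟩
  rwa [← itr_iterate, ← itr_iterate]

lemma bddAbove_sepSet {X : Type*} [UniformSpace X] [CompactSpace X] (f : ℕ → X → X) (N : ℕ)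
    {γ : Set (X × X)} (hγ : γ ∈ 𝓤 X) :
    BddAbove {m | ∃ E : Finset X, ↑E ⊆ (Set.univ : Set X) ∧ IsSep f N γ ↑E ∧ E.card = m} := by
  classical
  obtain ⟨t, ht, tsymm, htγ⟩ := comp_symm_mem_uniformity_sets hγ
  obtain ⟨T, hT⟩ := isCompact_univ.elim_nhds_subcover (fun x => UniformSpace.ball x t)
    (fun x _ => UniformSpace.ball_mem_nhds x ht)
  have hcov : ∀ y : X, ∃ z, z ∈ T ∧ y ∈ UniformSpace.ball z t := by
    intro y
    simpa using hT.2 (mem_univ y)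
  choose z hzT hzb using hcov
  refine ⟨Fintype.card (Fin N → {x // x ∈ T}), ?_⟩
  rintro m ⟨E, -, hsep, rfl⟩
  have hcard : E.card ≤ (Finset.univ : Finset (Fin N → {x // x ∈ T})).card := by
    apply Finset.card_le_card_of_injOn
      (fun x (j : Fin N) => (⟨z (itr f 0 j x), hzT _⟩ : {x // x ∈ T}))
    · intro a _
      exact Finset.mem_univ _
    · intro x hx y hy hxy
      by_contra hne
      obtain ⟨j, hj, hsepj⟩ := hsep x hx y hy hne
      have hz_eq : z (itr f 0 j x) = z (itr f 0 j y) := by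
        simpa [Subtype.ext_iff] using congrFun hxy ⟨j, hj⟩
      apply hsepj
      apply htγ
      refine ⟨z (itr f 0 j x), ?_, ?_⟩
      · exact tsymm.symm _ _ (hzb (itr f 0 j x))
      · rw [hz_eq]; exact hzb (itr f 0 j y)
  simpa [Finset.card_univ] using hcard

/-- Multiplication by a positive real constant as an order isomorphism of `EReal`. -/
noncomputable def erealMulIso (c : ℝ) (hc : 0 < c) : EReal ≃o EReal := by
  have hinv_ne_top : ((c : EReal))⁻¹ ≠ ⊤ := by
    rw [← EReal.coe_inv]
    exact EReal.coe_ne_top _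
  have hinv_pos : (0 : EReal) < ((c : EReal))⁻¹ :=
    EReal.inv_pos_of_pos_ne_top (by exact_mod_cast hc) (EReal.coe_ne_top c)
  have hkey : ∀ a : EReal, a / ((c : EReal))⁻¹ = (c : EReal) * a := by
    intro a
    show a * ((c : EReal))⁻¹⁻¹ = (c : EReal) * a
    rw [EReal.inv_inv (EReal.coe_ne_bot c) (EReal.coe_ne_top c), mul_comm]
  refine StrictMono.orderIsoOfSurjective (fun a => (c : EReal) * a) ?_ ?_
  · intro a b hab
    have := EReal.strictMono_div_right_of_pos hinv_pos hinv_ne_top hab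
    simpa only [hkey] using this
  · intro b
    refine ⟨b / (c : EReal), ?_⟩
    exact EReal.mul_div_cancel (EReal.coe_ne_bot c) (EReal.coe_ne_top c) (ne_of_gt (by exact_mod_cast hc))

lemma erealMulIso_apply (c : ℝ) (hc : 0 < c) (a : EReal) :
    erealMulIso c hc a = (c : EReal) * a := rfl

lemma ereal_limsup_const_mul {c : ℝ} (hc : 0 < c) (u : ℕ → EReal) :
    atTop.limsup (fun m => (c : EReal) * u m) = (c : EReal) * atTop.limsup u :=
  ((erealMulIso c hc).limsup_apply).symm

lemma ereal_mul_le_mul_left {c : ℝ} (hc : 0 < c) {a b : EReal} (h : a ≤ b) :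
    (c : EReal) * a ≤ (c : EReal) * b :=
  (erealMulIso c hc).monotone h

lemma real_log_div_step {n m : ℕ} (hn : 1 ≤ n) {s S : ℕ} (hsS : s ≤ S) :
    Real.log s / m ≤ (n : ℝ) * (Real.log S / ((m * n : ℕ) : ℝ)) := by
  have hlog : Real.log s ≤ Real.log S := by
    rcases Nat.eq_zero_or_pos s with h0 | hpos
    · rw [h0]
      simpa using Real.log_natCast_nonneg S
    · exact Real.log_le_log (by exact_mod_cast hpos) (by exact_mod_cast hsS)
  rcases Nat.eq_zero_or_pos m with rfl | hm
  · simp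
  · have hmn : ((m * n : ℕ) : ℝ) = (m : ℝ) * (n : ℝ) := by push_cast; ring
    have hm' : (0 : ℝ) < m := by exact_mod_cast hm
    have hn' : (0 : ℝ) < n := by exact_mod_cast hn
    have heq : (n : ℝ) * (Real.log S / ((m * n : ℕ) : ℝ)) = Real.log S / m := by
      rw [hmn]
      field_simp
    rw [heq]
    exact div_le_div_of_nonneg_right hlog hm'.le

/-- The entropy of the `n`-th iterate system `f_{0,∞}^n = {f_{kn}^n}_k` is at most
`n` times the entropy of `f_{0,∞}`. -/
theorem entropy_iterate_le {X : Type*} [UniformSpace X] [CompactSpace X]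
    (f : ℕ → X → X) (hf : ∀ k, Continuous (f k)) (n : ℕ) (hn : 1 ≤ n) :
    entropy (fun k => itr f (k * n) n) Set.univ ≤ (n : EReal) * entropy f Set.univ := by
  classical
  have hn' : (0 : ℝ) < (n : ℝ) := by exact_mod_cast hn
  rw [entropy]
  refine iSup₂_le fun γ hγ => ?_
  set B : ℕ → EReal := fun N => ((Real.log (sepCard f Set.univ N γ) / N : ℝ) : EReal) with hB
  have hsep_le : ∀ m : ℕ,
      sepCard (fun k => itr f (k * n) n) Set.univ m γ ≤ sepCard f Set.univ (m * n) γ := by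
    intro m
    apply csSup_le_csSup (bddAbove_sepSet f (m * n) hγ)
    · refine ⟨0, (∅ : Finset X), by simp, ?_, by simp⟩
      intro x hx
      simp at hx
    · rintro m' ⟨E, hE, hEsep, rfl⟩
      exact ⟨E, hE, isSep_of_isSep_iterate f hn m γ _ hEsep, rfl⟩
  have step1 : ∀ m : ℕ,
      ((Real.log (sepCard (fun k => itr f (k * n) n) Set.univ m γ) / m : ℝ) : EReal)
        ≤ ((n : ℝ) : EReal) * B (m * n) := by
    intro m
    rw [hB]
    rw [← EReal.coe_mul]
    exact EReal.coe_le_coe_iff.mpr (real_log_div_step hn (hsep_le m))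
  have htend : Tendsto (fun m : ℕ => m * n) atTop atTop :=
    Filter.tendsto_atTop_atTop.mpr fun b => ⟨b, fun a ha => ha.trans (Nat.le_mul_of_pos_right a hn)⟩
  calc atTop.limsup (fun m : ℕ =>
        ((Real.log (sepCard (fun k => itr f (k * n) n) Set.univ m γ) / m : ℝ) : EReal))
      ≤ atTop.limsup (fun m : ℕ => ((n : ℝ) : EReal) * B (m * n)) :=
        limsup_le_limsup (Eventually.of_forall step1)
    _ = ((n : ℝ) : EReal) * atTop.limsup (fun m : ℕ => B (m * n)) :=
        ereal_limsup_const_mul hn' _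
    _ ≤ ((n : ℝ) : EReal) * atTop.limsup B := by
        apply ereal_mul_le_mul_left hn'
        have : (fun m : ℕ => B (m * n)) = B ∘ (fun m : ℕ => m * n) := rfl
        rw [this, limsup_comp]
        exact limsup_le_limsup_of_le htend
    _ ≤ ((n : ℝ) : EReal) * entropy f Set.univ := by
        apply ereal_mul_le_mul_left hn'
        exact le_iSup₂_of_le γ hγ le_rfl
    _ = (n : EReal) * entropy f Set.univ := by rw [EReal.coe_coe_eq_natCast]
end

section
/- Let (X, 𝒰) and (Y, 𝒱) be compact uniform spaces, f_{0,∞} and g_{0,∞} sequences of continuous self-maps of X and Y respectively. Then the product system satisfies h(f_{0,∞} × g_{0,∞}) ≤ h(f_{0,∞}) + h(g_{0,∞}). -/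
open Filter Set
open scoped Uniformity

-- aux lemmas
lemma itr_continuous {X : Type*} [TopologicalSpace X] (f : ℕ → X → X)
    (hf : ∀ n, Continuous (f n)) (i n : ℕ) : Continuous (itr f i n) := by
  induction n with
  | zero => exact continuous_id
  | succ n ih => exact (hf _).comp ih

lemma itr_prod {X Y : Type*} (f : ℕ → X → X) (g : ℕ → Y → Y) (i n : ℕ) (p : X × Y) :
    itr (fun n (p : X × Y) => (f n p.1, g n p.2)) i n p = (itr f i n p.1, itr g i n p.2) := by
  induction n with
  | zero => rfl
  | succ n ih => simp [itr, ih]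

lemma exists_finite_span {X : Type*} [UniformSpace X] [CompactSpace X] (f : ℕ → X → X)
    (hf : ∀ n, Continuous (f n)) (n : ℕ) {δ : Set (X × X)} (hδ : δ ∈ 𝓤 X) :
    ∃ F : Finset X, Spans f n δ ↑F Set.univ := by
  obtain ⟨δ', ⟨hmem, hopen⟩, hsub⟩ := uniformity_hasBasis_open.mem_iff.1 hδ
  set U : X → Set X := fun x => ⋂ j ∈ Finset.range n,
    (fun z => (itr f 0 j z, itr f 0 j x)) ⁻¹' δ' with hU
  have hUopen : ∀ x, IsOpen (U x) := fun x =>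
    isOpen_biInter_finset fun j _ =>
      hopen.preimage ((itr_continuous f hf 0 j).prodMk continuous_const)
  have hcover : (Set.univ : Set X) ⊆ ⋃ x, U x := fun z _ =>
    Set.mem_iUnion.2 ⟨z, Set.mem_iInter₂.2 fun j _ => refl_mem_uniformity hmem⟩
  obtain ⟨t, ht⟩ := isCompact_univ.elim_finite_subcover U hUopen hcover
  refine ⟨t, fun x _ => ?_⟩
  obtain ⟨y, hyt, hxU⟩ := Set.mem_iUnion₂.1 (ht (Set.mem_univ x))
  exact ⟨y, Finset.mem_coe.2 hyt, fun j hj =>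
    hsub (Set.mem_iInter₂.1 hxU j (Finset.mem_range.2 hj))⟩

lemma sep_card_le_span_card {X : Type*} (f : ℕ → X → X) (n : ℕ) {γ δ : Set (X × X)}
    (hcomp : ∀ a b c : X, (a, c) ∈ δ → (b, c) ∈ δ → (a, b) ∈ γ)
    {E F : Finset X} (hE : IsSep f n γ ↑E) (hF : Spans f n δ ↑F Set.univ) :
    E.card ≤ F.card := by
  classical
  choose φ hφF hφ using fun x : X => hF x (Set.mem_univ x)
  refine Finset.card_le_card_of_injOn φ (fun x _ => Finset.mem_coe.1 (hφF x)) ?_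
  intro x hx y hy hxy
  by_contra hne
  obtain ⟨j, hj, hnot⟩ := hE x hx y hy hne
  exact hnot (hcomp _ _ _ (hφ x j hj) (hxy ▸ hφ y j hj))

lemma exists_max_sep {X : Type*} [UniformSpace X] [CompactSpace X] (f : ℕ → X → X)
    (hf : ∀ n, Continuous (f n)) (n : ℕ) {δ : Set (X × X)} (hδ : δ ∈ 𝓤 X) :
    ∃ E : Finset X, IsSep f n δ ↑E ∧ E.card = sepCard f Set.univ n δ ∧
      ∀ E' : Finset X, IsSep f n δ ↑E' → E'.card ≤ E.card := by
  classical
  obtain ⟨δ', hδ'mem, hsym, hδ'comp⟩ := comp_symm_mem_uniformity_sets hδ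
  obtain ⟨F, hF⟩ := exists_finite_span f hf n hδ'mem
  have hcomp : ∀ a b c : X, (a, c) ∈ δ' → (b, c) ∈ δ' → (a, b) ∈ δ := fun a b c h1 h2 =>
    hδ'comp (SetRel.prodMk_mem_comp h1 (SetRel.symm _ h2))
  set S := {m | ∃ E : Finset X, ↑E ⊆ (Set.univ : Set X) ∧ IsSep f n δ ↑E ∧ E.card = m} with hS
  have hne : S.Nonempty := ⟨0, ∅, by simp, fun x hx => absurd hx (by simp), by simp⟩
  have hbdd : BddAbove S := ⟨F.card, fun m ⟨E, _, hEsep, hEcard⟩ =>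
    hEcard ▸ sep_card_le_span_card f n hcomp hEsep hF⟩
  obtain ⟨E, _, hEsep, hEcard⟩ := Nat.sSup_mem hne hbdd
  exact ⟨E, hEsep, hEcard, fun E' hE' =>
    hEcard ▸ le_csSup hbdd ⟨E', Set.subset_univ _, hE', rfl⟩⟩

lemma max_sep_spans {X : Type*} [UniformSpace X] (f : ℕ → X → X) (n : ℕ) {δ : Set (X × X)}
    (hδ : δ ∈ 𝓤 X) (hsym : SetRel.IsSymm δ) {E : Finset X} (hE : IsSep f n δ ↑E)
    (hmax : ∀ E' : Finset X, IsSep f n δ ↑E' → E'.card ≤ E.card) :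
    Spans f n δ ↑E Set.univ := by
  classical
  intro x _
  by_contra h
  push_neg at h
  have hxE : x ∉ E := fun hx => by
    obtain ⟨j, _, hn⟩ := h x (Finset.mem_coe.2 hx)
    exact hn (refl_mem_uniformity hδ)
  have hsep : IsSep f n δ ↑(insert x E) := by
    intro a ha b hb hab
    rw [Finset.coe_insert, Set.mem_insert_iff] at ha hb
    rcases ha with ha | ha <;> rcases hb with hb | hb
    · exact absurd (ha.trans hb.symm) hab
    · exact ha ▸ h b hb
    · obtain ⟨j, hj, hn⟩ := h a ha
      exact hb ▸ ⟨j, hj, fun hmem => hn (SetRel.symm _ hmem)⟩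
    · exact hE a ha b hb hab
  have := hmax _ hsep
  rw [Finset.card_insert_of_notMem hxE] at this
  omega

lemma sepCard_prod_le {X Y : Type*} [UniformSpace X] [CompactSpace X]
    [UniformSpace Y] [CompactSpace Y]
    (f : ℕ → X → X) (hf : ∀ n, Continuous (f n))
    (g : ℕ → Y → Y) (hg : ∀ n, Continuous (g n))
    {W : Set ((X × Y) × X × Y)} (hW : W ∈ 𝓤 (X × Y)) :
    ∃ δ₁ ∈ 𝓤 X, ∃ δ₂ ∈ 𝓤 Y, ∀ n : ℕ,
      sepCard (fun n (p : X × Y) => (f n p.1, g n p.2)) Set.univ n W ≤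
        sepCard f Set.univ n δ₁ * sepCard g Set.univ n δ₂ := by
  classical
  obtain ⟨γ, hγ, η, hη, hsubW⟩ := entourageProd_subset hW
  obtain ⟨δ₁, hδ₁, hsym₁, hcomp₁⟩ := comp_symm_mem_uniformity_sets hγ
  obtain ⟨δ₂, hδ₂, hsym₂, hcomp₂⟩ := comp_symm_mem_uniformity_sets hη
  refine ⟨δ₁, hδ₁, δ₂, hδ₂, fun n => ?_⟩
  obtain ⟨E₁, hE₁sep, hE₁card, hE₁max⟩ := exists_max_sep f hf n hδ₁
  obtain ⟨E₂, hE₂sep, hE₂card, hE₂max⟩ := exists_max_sep g hg n hδ₂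
  have hS₁ := max_sep_spans f n hδ₁ hsym₁ hE₁sep hE₁max
  have hS₂ := max_sep_spans g n hδ₂ hsym₂ hE₂sep hE₂max
  set P : ℕ → X × Y → X × Y := fun n p => (f n p.1, g n p.2) with hP
  have hFspan : Spans P n (entourageProd δ₁ δ₂) ↑(E₁ ×ˢ E₂) Set.univ := by
    intro p _
    obtain ⟨y₁, hy₁, h₁⟩ := hS₁ p.1 (Set.mem_univ _)
    obtain ⟨y₂, hy₂, h₂⟩ := hS₂ p.2 (Set.mem_univ _)
    refine ⟨(y₁, y₂), ?_, fun j hj => ?_⟩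
    · exact Finset.mem_coe.2 (Finset.mem_product.2 ⟨Finset.mem_coe.1 hy₁, Finset.mem_coe.1 hy₂⟩)
    · rw [itr_prod, itr_prod]
      exact mem_entourageProd.2 ⟨h₁ j hj, h₂ j hj⟩
  have hcomp : ∀ a b c : X × Y, (a, c) ∈ entourageProd δ₁ δ₂ →
      (b, c) ∈ entourageProd δ₁ δ₂ → (a, b) ∈ W := by
    intro a b c hac hbc
    obtain ⟨h1, h2⟩ := mem_entourageProd.1 hac
    obtain ⟨h3, h4⟩ := mem_entourageProd.1 hbc
    refine hsubW (mem_entourageProd.2 ⟨?_, ?_⟩)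
    · exact hcomp₁ (SetRel.prodMk_mem_comp h1 (SetRel.symm _ h3))
    · exact hcomp₂ (SetRel.prodMk_mem_comp h2 (SetRel.symm _ h4))
  have hbound : ∀ m ∈ {m | ∃ E : Finset (X × Y), ↑E ⊆ (Set.univ : Set (X × Y)) ∧
      IsSep P n W ↑E ∧ E.card = m}, m ≤ E₁.card * E₂.card := by
    rintro m ⟨E, _, hEsep, rfl⟩
    calc E.card ≤ (E₁ ×ˢ E₂).card := sep_card_le_span_card P n hcomp hEsep hFspan
    _ = E₁.card * E₂.card := Finset.card_product _ _
  calc sepCard P Set.univ n W ≤ E₁.card * E₂.card := csSup_le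
        ⟨0, ∅, by simp, fun x hx => absurd hx (by simp), by simp⟩ hbound
  _ = sepCard f Set.univ n δ₁ * sepCard g Set.univ n δ₂ := by rw [hE₁card, hE₂card]

lemma log_nat_nonneg (m : ℕ) : 0 ≤ Real.log m := by
  rcases Nat.eq_zero_or_pos m with h | h
  · simp [h]
  · exact Real.log_nonneg (by exact_mod_cast h)

lemma log_nat_mul_le {a b c : ℕ} (h : a ≤ b * c) :
    Real.log a ≤ Real.log b + Real.log c := by
  rcases Nat.eq_zero_or_pos a with ha | ha
  · simp only [ha, Nat.cast_zero, Real.log_zero]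
    exact add_nonneg (log_nat_nonneg b) (log_nat_nonneg c)
  · have hb : 0 < b := Nat.pos_of_ne_zero (by rintro rfl; simp at h; omega)
    have hc : 0 < c := Nat.pos_of_ne_zero (by rintro rfl; simp at h; omega)
    have h1 : Real.log a ≤ Real.log (b * c) :=
      (Real.log_le_log_iff (by exact_mod_cast ha) (by positivity)).2 (by exact_mod_cast h)
    rwa [Real.log_mul (by positivity) (by positivity)] at h1



/-- Subadditivity of entropy under products: the entropy of the product system
`f_{0,∞} × g_{0,∞}` on `X × Y` (with the product uniformity) is at most the sum of
the entropies of the factors. -/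
theorem entropy_prod_le {X Y : Type*} [UniformSpace X] [CompactSpace X]
    [UniformSpace Y] [CompactSpace Y]
    (f : ℕ → X → X) (hf : ∀ n, Continuous (f n))
    (g : ℕ → Y → Y) (hg : ∀ n, Continuous (g n)) :
    entropy (fun n (p : X × Y) => (f n p.1, g n p.2)) Set.univ ≤
      entropy f Set.univ + entropy g Set.univ := by
  rw [entropy]
  refine iSup₂_le fun W hW => ?_
  obtain ⟨δ₁, h1, δ₂, h2, hb⟩ := sepCard_prod_le f hf g hg hW
  set u : ℕ → EReal := fun n => ((Real.log (sepCard f Set.univ n δ₁) / n : ℝ) : EReal) with hu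
  set v : ℕ → EReal := fun n => ((Real.log (sepCard g Set.univ n δ₂) / n : ℝ) : EReal) with hv
  have hpt : ∀ n : ℕ, ((Real.log (sepCard (fun n (p : X × Y) => (f n p.1, g n p.2))
      Set.univ n W) / n : ℝ) : EReal) ≤ (u + v) n := by
    intro n
    have h := log_nat_mul_le (hb n)
    simp only [Pi.add_apply, hu, hv, ← EReal.coe_add]
    apply EReal.coe_le_coe_iff.2
    rw [← add_div]
    rcases Nat.eq_zero_or_pos n with hn | hn
    · simp [hn]
    · exact div_le_div_of_nonneg_right h (Nat.cast_nonneg n) |>.trans le_rfl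
  have hzero : ∀ w : ℕ → EReal, (∀ n, 0 ≤ w n) → (0 : EReal) ≤ atTop.limsup w := by
    intro w hw
    have : atTop.limsup (fun _ : ℕ => (0 : EReal)) ≤ atTop.limsup w :=
      limsup_le_limsup (Eventually.of_forall hw)
    simpa using this
  have hu0 : (0 : EReal) ≤ atTop.limsup u := hzero u fun n =>
    EReal.coe_nonneg.2 (div_nonneg (log_nat_nonneg _) (Nat.cast_nonneg _))
  have hv0 : (0 : EReal) ≤ atTop.limsup v := hzero v fun n =>
    EReal.coe_nonneg.2 (div_nonneg (log_nat_nonneg _) (Nat.cast_nonneg _))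
  calc atTop.limsup (fun n : ℕ => ((Real.log (sepCard (fun n (p : X × Y) => (f n p.1, g n p.2))
          Set.univ n W) / n : ℝ) : EReal))
      ≤ atTop.limsup (u + v) := limsup_le_limsup (Eventually.of_forall hpt)
    _ ≤ atTop.limsup u + atTop.limsup v :=
        EReal.limsup_add_le (Or.inl ((lt_of_lt_of_le (by norm_num) hu0).ne'))
          (Or.inr ((lt_of_lt_of_le (by norm_num : (⊥:EReal) < 0) hv0).ne'))
    _ ≤ entropy f Set.univ + entropy g Set.univ := by
        apply add_le_add
        · rw [entropy]; exact le_iSup₂_of_le δ₁ h1 le_rfl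
        · rw [entropy]; exact le_iSup₂_of_le δ₂ h2 le_rfl
end

section
/- Let X be a compact uniform space and f_{0,∞} a sequence of continuous self-maps of X. For every k ≥ 1, the k-fold product system f_{0,∞}^{(k)} = {f_n × ⋯ × f_n (k times)} on X^k satisfies h(f_{0,∞}^{(k)}) = k · h(f_{0,∞}). -/
open Filter Set
open scoped Uniformity

/-! ### Auxiliary lemmas -/

section Aux

variable {X : Type*}

lemma itr_pi (f : ℕ → X → X) (k a m : ℕ) (x : Fin k → X) :
    itr (fun n (x : Fin k → X) (i : Fin k) => f n (x i)) a m x = fun i => itr f a m (x i) := by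
  induction m with
  | zero => rfl
  | succ m ih => simp only [itr, ih]

lemma continuous_itr [TopologicalSpace X] {f : ℕ → X → X} (hf : ∀ n, Continuous (f n))
    (a m : ℕ) : Continuous (itr f a m) := by
  induction m with
  | zero => exact continuous_id
  | succ m ih => exact (hf (a + m)).comp ih

/-- The product entourage on `Fin k → X`. -/
def piEnt (k : ℕ) (γ : Set (X × X)) : Set ((Fin k → X) × (Fin k → X)) :=
  {p | ∀ i, (p.1 i, p.2 i) ∈ γ}

lemma mem_piEnt {k : ℕ} {γ : Set (X × X)} {p : (Fin k → X) × (Fin k → X)} :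
    p ∈ piEnt k γ ↔ ∀ i, (p.1 i, p.2 i) ∈ γ := Iff.rfl

variable [UniformSpace X]

lemma piEnt_mem (k : ℕ) {γ : Set (X × X)} (hγ : γ ∈ 𝓤 X) : piEnt k γ ∈ 𝓤 (Fin k → X) := by
  have h : piEnt k γ =
      ⋂ i : Fin k, (fun p : (Fin k → X) × (Fin k → X) => (p.1 i, p.2 i)) ⁻¹' γ := by
    ext p; simp [piEnt]
  rw [h, Pi.uniformity]
  exact iInter_mem.mpr fun i => mem_iInf_of_mem i (Filter.preimage_mem_comap hγ)

lemma piEnt_basis {k : ℕ} {Γ : Set ((Fin k → X) × (Fin k → X))} (hΓ : Γ ∈ 𝓤 (Fin k → X)) :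
    ∃ γ ∈ 𝓤 X, piEnt k γ ⊆ Γ := by
  rw [Pi.uniformity] at hΓ
  obtain ⟨t, ht, rfl⟩ := (Filter.mem_iInf_of_finite Γ).mp hΓ
  choose γ hγ hγt using fun i => Filter.mem_comap.mp (ht i)
  refine ⟨⋂ i, γ i, (Filter.iInter_mem).mpr hγ, fun p hp => ?_⟩
  exact mem_iInter.mpr fun i => hγt i (mem_iInter.mp (hp i) i)

variable [CompactSpace X] {f : ℕ → X → X}

lemma exists_spans (hf : ∀ n, Continuous (f n)) (n : ℕ) {γ : Set (X × X)} (hγ : γ ∈ 𝓤 X) :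
    ∃ F : Finset X, Spans f n γ ↑F Set.univ := by
  obtain ⟨γ', ⟨hm, ho⟩, hsub⟩ := uniformity_hasBasis_open.mem_iff.mp hγ
  set U : X → Set X := fun c => ⋂ j : Fin n, (fun x => (itr f 0 j x, itr f 0 j c)) ⁻¹' γ'
    with hU
  have hUopen : ∀ c, IsOpen (U c) := fun c =>
    isOpen_iInter_of_finite fun j =>
      ho.preimage ((continuous_itr hf 0 j).prodMk continuous_const)
  have hcov : (univ : Set X) ⊆ ⋃ c : X, U c := fun x _ =>
    mem_iUnion.mpr ⟨x, mem_iInter.mpr fun j => refl_mem_uniformity hm⟩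
  obtain ⟨t, ht⟩ := isCompact_univ.elim_finite_subcover U hUopen hcov
  refine ⟨t, fun x _ => ?_⟩
  obtain ⟨c, hc, hx⟩ := mem_iUnion₂.mp (ht (mem_univ x))
  exact ⟨c, hc, fun j hj => hsub (mem_iInter.mp hx ⟨j, hj⟩)⟩

lemma card_sep_le {Y : Type*} {g : ℕ → Y → Y} {n : ℕ} {η δ : Set (Y × Y)}
    (hcomp : ∀ x y z : Y, (x, z) ∈ δ → (y, z) ∈ δ → (x, y) ∈ η)
    {E F : Finset Y} (hE : IsSep g n η ↑E) (hF : Spans g n δ ↑F Set.univ) :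
    E.card ≤ F.card := by
  have h : ∀ x : Y, ∃ y ∈ F, ∀ j < n, (itr g 0 j x, itr g 0 j y) ∈ δ := fun x =>
    hF x (mem_univ x)
  choose s hsF hsδ using h
  refine Finset.card_le_card_of_injOn s (fun x _ => hsF x) ?_
  intro x hx y hy hxy
  by_contra hne
  obtain ⟨j, hj, hnot⟩ := hE x hx y hy hne
  exact hnot (hcomp _ _ _ (hsδ x j hj) (by rw [hxy]; exact hsδ y j hj))

lemma sepSet_zero_mem (g : ℕ → Y → Y) (n : ℕ) (γ : Set (Y × Y)) :
    0 ∈ {m | ∃ E : Finset Y, ↑E ⊆ (univ : Set Y) ∧ IsSep g n γ ↑E ∧ E.card = m} :=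
  ⟨∅, by simp, fun x hx => by simp at hx, rfl⟩

lemma sep_bddAbove (hf : ∀ n, Continuous (f n)) {γ : Set (X × X)} (hγ : γ ∈ 𝓤 X) (n : ℕ) :
    BddAbove {m | ∃ E : Finset X, ↑E ⊆ (univ : Set X) ∧ IsSep f n γ ↑E ∧ E.card = m} := by
  obtain ⟨δ, hδ, hsymm, hδγ⟩ := comp_symm_mem_uniformity_sets hγ
  obtain ⟨F, hF⟩ := exists_spans hf n hδ
  refine ⟨F.card, ?_⟩
  rintro m ⟨E, -, hE, rfl⟩
  exact card_sep_le
    (fun x y z hxz hyz => hδγ (SetRel.prodMk_mem_comp hxz (hsymm.symm _ _ hyz))) hE hF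

lemma exists_maxSep (hf : ∀ n, Continuous (f n)) {δ : Set (X × X)} (hδ : δ ∈ 𝓤 X)
    (hsymm : SetRel.IsSymm δ) (n : ℕ) :
    ∃ E : Finset X, IsSep f n δ ↑E ∧ E.card = sepCard f Set.univ n δ ∧
      Spans f n δ ↑E Set.univ := by
  classical
  have hbdd := sep_bddAbove hf hδ n
  have hne : {m | ∃ E : Finset X, ↑E ⊆ (univ : Set X) ∧ IsSep f n δ ↑E ∧
      E.card = m}.Nonempty := ⟨0, sepSet_zero_mem f n δ⟩
  obtain ⟨E, -, hEsep, hEcard⟩ := Nat.sSup_mem hne hbdd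
  refine ⟨E, hEsep, hEcard, ?_⟩
  intro x _
  by_contra hcon
  push_neg at hcon
  have hxE : x ∉ E := by
    intro hx
    obtain ⟨j, hj, hnot⟩ := hcon x hx
    exact hnot (refl_mem_uniformity hδ)
  have hins : IsSep f n δ ↑(insert x E) := by
    intro a ha b hb hab
    rw [Finset.coe_insert, Set.mem_insert_iff] at ha hb
    rcases ha with rfl | ha
    · rcases hb with rfl | hb
      · exact absurd rfl hab
      · exact hcon b hb
    · rcases hb with rfl | hb
      · obtain ⟨j, hj, hnot⟩ := hcon a ha
        exact ⟨j, hj, fun hmem => hnot (hsymm.symm _ _ hmem)⟩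
      · exact hEsep a ha b hb hab
  have hle : (insert x E).card ≤ sSup {m | ∃ E : Finset X, ↑E ⊆ (univ : Set X) ∧
      IsSep f n δ ↑E ∧ E.card = m} :=
    le_csSup hbdd ⟨insert x E, subset_univ _, hins, rfl⟩
  rw [Finset.card_insert_of_notMem hxE, hEcard] at hle
  exact Nat.not_succ_le_self _ hle

lemma sepCard_pi_le (hf : ∀ n, Continuous (f n)) (k : ℕ)
    {Γ : Set ((Fin k → X) × (Fin k → X))} (hΓ : Γ ∈ 𝓤 (Fin k → X)) :
    ∃ δ ∈ 𝓤 X, ∀ n, sepCard (fun n (x : Fin k → X) (i : Fin k) => f n (x i)) Set.univ n Γ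
      ≤ (sepCard f Set.univ n δ) ^ k := by
  obtain ⟨γ, hγ, hγΓ⟩ := piEnt_basis hΓ
  obtain ⟨δ, hδ, hsymm, hδγ⟩ := comp_symm_mem_uniformity_sets hγ
  refine ⟨δ, hδ, fun n => ?_⟩
  obtain ⟨E₀, hE₀sep, hE₀card, hE₀span⟩ := exists_maxSep hf hδ hsymm n
  have hFspan : Spans (fun n (x : Fin k → X) (i : Fin k) => f n (x i)) n (piEnt k δ)
      ↑(Fintype.piFinset fun _ : Fin k => E₀) Set.univ := by
    intro x _
    choose y hyE hyδ using fun i => hE₀span (x i) (mem_univ _)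
    refine ⟨y, by simpa [Fintype.mem_piFinset] using hyE, fun j hj => ?_⟩
    intro i
    simp only [itr_pi]
    exact hyδ i j hj
  have hcomp : ∀ x y z : Fin k → X,
      (x, z) ∈ piEnt k δ → (y, z) ∈ piEnt k δ → (x, y) ∈ Γ := by
    intro x y z hxz hyz
    refine hγΓ ?_
    intro i
    exact hδγ (SetRel.prodMk_mem_comp (hxz i) (hsymm.symm _ _ (hyz i)))
  have h0 : ({m | ∃ E : Finset (Fin k → X), ↑E ⊆ (univ : Set (Fin k → X)) ∧
      IsSep (fun n (x : Fin k → X) (i : Fin k) => f n (x i)) n Γ ↑E ∧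
      E.card = m}).Nonempty := ⟨0, sepSet_zero_mem _ n Γ⟩
  refine csSup_le h0 ?_
  rintro m ⟨E, -, hEsep, rfl⟩
  calc E.card ≤ (Fintype.piFinset fun _ : Fin k => E₀).card :=
        card_sep_le hcomp hEsep hFspan
    _ = E₀.card ^ k := Fintype.card_piFinset_const E₀ k
    _ = (sepCard f Set.univ n δ) ^ k := by rw [hE₀card]

lemma pow_le_sepCard_pi (hf : ∀ n, Continuous (f n)) (k : ℕ)
    {γ : Set (X × X)} (hγ : γ ∈ 𝓤 X) (n : ℕ) :
    (sepCard f Set.univ n γ) ^ k ≤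
      sepCard (fun n (x : Fin k → X) (i : Fin k) => f n (x i)) Set.univ n (piEnt k γ) := by
  have hfk : ∀ m, Continuous (fun (x : Fin k → X) (i : Fin k) => f m (x i)) :=
    fun m => continuous_pi fun i => (hf m).comp (continuous_apply i)
  obtain ⟨E, -, hEsep, hEcard⟩ :=
    Nat.sSup_mem ⟨0, sepSet_zero_mem f n γ⟩ (sep_bddAbove hf hγ n)
  have hEcard' : E.card = sepCard f Set.univ n γ := hEcard
  have hsep : IsSep (fun n (x : Fin k → X) (i : Fin k) => f n (x i)) n (piEnt k γ)
      ↑(Fintype.piFinset fun _ : Fin k => E) := by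
    intro x hx y hy hxy
    have hex : ∃ i, x i ≠ y i := by
      by_contra hcon; push_neg at hcon; exact hxy (funext hcon)
    obtain ⟨i, hi⟩ := hex
    have hxi : x i ∈ (E : Set X) :=
      Fintype.mem_piFinset.mp (Finset.mem_coe.mp hx) i
    have hyi : y i ∈ (E : Set X) :=
      Fintype.mem_piFinset.mp (Finset.mem_coe.mp hy) i
    obtain ⟨j, hj, hnot⟩ := hEsep (x i) hxi (y i) hyi hi
    refine ⟨j, hj, fun hmem => hnot ?_⟩
    have h2 := hmem i
    simpa [itr_pi] using h2
  have hle := le_csSup (sep_bddAbove hfk (piEnt_mem k hγ) n)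
    (show _ ∈ _ from ⟨Fintype.piFinset fun _ : Fin k => E, subset_univ _, hsep, rfl⟩)
  rw [Fintype.card_piFinset_const] at hle
  rw [← hEcard']
  exact hle

end Aux

/-! ### Real logarithm lemmas -/

lemma nat_log_le_pow {a b : ℕ} (k : ℕ) (h : a ≤ b ^ k) :
    Real.log a ≤ k * Real.log b := by
  rcases Nat.eq_zero_or_pos a with rfl | ha
  · simpa using mul_nonneg (Nat.cast_nonneg k) (Real.log_natCast_nonneg b)
  · have h1 : (a : ℝ) ≤ (b : ℝ) ^ k := by exact_mod_cast h
    have ha' : (0 : ℝ) < a := by exact_mod_cast ha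
    calc Real.log a ≤ Real.log ((b : ℝ) ^ k) := Real.log_le_log ha' h1
      _ = k * Real.log b := by rw [Real.log_pow]

lemma nat_pow_log_le {a b : ℕ} (k : ℕ) (h : b ^ k ≤ a) :
    (k : ℝ) * Real.log b ≤ Real.log a := by
  rcases Nat.eq_zero_or_pos b with rfl | hb
  · simpa using Real.log_natCast_nonneg a
  · have h1 : ((b : ℝ)) ^ k ≤ a := by exact_mod_cast h
    have hb' : (0 : ℝ) < b := by exact_mod_cast hb
    calc (k : ℝ) * Real.log b = Real.log ((b : ℝ) ^ k) := by rw [Real.log_pow]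
      _ ≤ Real.log a := Real.log_le_log (by positivity) h1

lemma term_le {a b k : ℕ} (h : a ≤ b ^ k) (n : ℕ) :
    Real.log a / n ≤ k * (Real.log b / n) := by
  rw [← mul_div_assoc]
  rcases Nat.eq_zero_or_pos n with rfl | hn
  · simp
  · have hn' : (0 : ℝ) < n := by exact_mod_cast hn
    gcongr
    exact nat_log_le_pow k h

lemma term_ge {a b k : ℕ} (h : b ^ k ≤ a) (n : ℕ) :
    k * (Real.log b / n) ≤ Real.log a / n := by
  rw [← mul_div_assoc]
  rcases Nat.eq_zero_or_pos n with rfl | hn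
  · simp
  · have hn' : (0 : ℝ) < n := by exact_mod_cast hn
    gcongr
    exact nat_pow_log_le k h

/-! ### Multiplication by a positive natural as an order isomorphism of `EReal` -/

lemma exists_mul_orderIso (k : ℕ) (hk : 1 ≤ k) :
    ∃ g : EReal ≃o EReal, ∀ x, g x = (k : EReal) * x := by
  have hkR : (0 : ℝ) < (k : ℝ)⁻¹ := by
    have : (0 : ℝ) < k := by exact_mod_cast hk
    positivity
  set b : EReal := (((k : ℝ)⁻¹ : ℝ) : EReal) with hb
  have hb0 : (0 : EReal) < b := by rw [hb]; exact_mod_cast hkR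
  have hbt : b ≠ ⊤ := by simp [hb]
  have hbb : b ≠ ⊥ := by simp [hb]
  have hbne : b ≠ 0 := hb0.ne'
  have hmono : StrictMono (fun a : EReal => a / b) :=
    EReal.strictMono_div_right_of_pos hb0 hbt
  have hsurj : Function.Surjective (fun a : EReal => a / b) := by
    intro y
    refine ⟨y * b, ?_⟩
    show y * b / b = y
    rw [← EReal.mul_div_right, EReal.div_mul_cancel hbb hbt hbne]
  refine ⟨StrictMono.orderIsoOfSurjective _ hmono hsurj, fun x => ?_⟩
  have hgx : StrictMono.orderIsoOfSurjective _ hmono hsurj x = x / b := by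
    rw [StrictMono.coe_orderIsoOfSurjective]
  rw [hgx]
  have hbinv : b⁻¹ = (((k : ℝ)) : EReal) := by
    rw [hb, ← EReal.coe_inv, inv_inv]
  rw [EReal.div_eq_inv_mul, hbinv]
  rfl

/-! ### Main theorem -/

/-- The `k`-fold product system `f_{0,∞}^{(k)}` on `X^k` (with the product uniformity)
has entropy `k · h(f_{0,∞})`. -/
theorem entropy_pow_prod {X : Type*} [UniformSpace X] [CompactSpace X]
    (f : ℕ → X → X) (hf : ∀ n, Continuous (f n)) (k : ℕ) (hk : 1 ≤ k) :
    entropy (fun n (x : Fin k → X) (i : Fin k) => f n (x i)) Set.univ =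
      (k : EReal) * entropy f Set.univ := by
  obtain ⟨g, hgdef⟩ := exists_mul_orderIso k hk
  have hke : (k : EReal) * entropy f Set.univ = ⨆ γ ∈ 𝓤 X, atTop.limsup
      (fun n : ℕ => (((k : ℝ) * (Real.log (sepCard f Set.univ n γ) / n) : ℝ) : EReal)) := by
    rw [← hgdef]
    unfold entropy
    rw [OrderIso.map_iSup]
    refine iSup_congr fun γ => ?_
    rw [OrderIso.map_iSup]
    refine iSup_congr fun hγ => ?_
    have hfun : (fun x : ℕ => g (((Real.log (sepCard f Set.univ x γ) / x : ℝ)) : EReal)) =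
        fun n : ℕ => (((k : ℝ) * (Real.log (sepCard f Set.univ n γ) / n) : ℝ) : EReal) := by
      funext n
      rw [hgdef, ← EReal.coe_coe_eq_natCast, ← EReal.coe_mul]
    rw [g.limsup_apply, hfun]
  rw [hke]
  apply le_antisymm
  · unfold entropy
    refine iSup₂_le fun Γ hΓ => ?_
    obtain ⟨δ, hδ, hsep⟩ := sepCard_pi_le hf k hΓ
    refine le_iSup₂_of_le δ hδ (limsup_le_limsup (Eventually.of_forall fun n => ?_))
    dsimp only
    exact_mod_cast term_le (hsep n) n
  · refine iSup₂_le fun γ hγ => ?_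
    unfold entropy
    refine le_iSup₂_of_le (piEnt k γ) (piEnt_mem k hγ)
      (limsup_le_limsup (Eventually.of_forall fun n => ?_))
    dsimp only
    exact_mod_cast term_ge (pow_le_sepCard_pi hf k hγ n) n
end

section
/- Let (X,𝒰) and (Y,𝒱) be compact uniform spaces, f_{0,∞} and g_{0,∞} sequences of continuous self-maps of X and Y, {Λ_n} ⊂ X invariant under f_{0,∞} (f_n(Λ_n) ⊂ Λ_{n+1}) and {D_n} ⊂ Y invariant under g_{0,∞}. Suppose there are surjective maps h_n : Λ_n → D_n with h_{n+1} ∘ f_n = g_n ∘ h_n on Λ_n and {h_n} equi-continuous. Then h(f_{0,∞}, Λ_0) ≥ h(g_{0,∞}, D_0). Consequently, if the systems are topologically equi-conjugate ({h_n} are bijections with {h_n^{−1}} also equi-continuous), then h(f_{0,∞}, Λ_0) = h(g_{0,∞}, D_0). -/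
open Filter Set
open scoped Uniformity

private lemma itr_mem {X : Type*} (f : ℕ → X → X) (Λ : ℕ → Set X)
    (hΛ : ∀ n, f n '' Λ n ⊆ Λ (n + 1)) {x : X} (hx : x ∈ Λ 0) :
    ∀ j, itr f 0 j x ∈ Λ j
  | 0 => hx
  | j + 1 => by
      have h1 := itr_mem f Λ hΛ hx j
      have h2 := hΛ j ⟨_, h1, rfl⟩
      simpa [itr] using h2

private lemma itr_semiconj {X Y : Type*} (f : ℕ → X → X) (g : ℕ → Y → Y) (Λ : ℕ → Set X)
    (hΛ : ∀ n, f n '' Λ n ⊆ Λ (n + 1)) (h : ℕ → X → Y)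
    (hsemi : ∀ n, ∀ x ∈ Λ n, h (n + 1) (f n x) = g n (h n x)) {x : X} (hx : x ∈ Λ 0) :
    ∀ j, h j (itr f 0 j x) = itr g 0 j (h 0 x)
  | 0 => rfl
  | j + 1 => by
      have hmem := itr_mem f Λ hΛ hx j
      have ih := itr_semiconj f g Λ hΛ h hsemi hx j
      simp only [itr, zero_add]
      rw [hsemi j _ hmem, ih]

private lemma sep_bdd {X : Type*} [UniformSpace X] [CompactSpace X] (f : ℕ → X → X)
    (Λ : Set X) (n : ℕ) (η : Set (X × X)) (hη : η ∈ 𝓤 X) :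
    BddAbove {m | ∃ E : Finset X, ↑E ⊆ Λ ∧ IsSep f n η ↑E ∧ E.card = m} := by
  obtain ⟨η₀, hη₀, hopen, hsym, hcomp⟩ := comp_open_symm_mem_uniformity_sets hη
  obtain ⟨t, ht⟩ := isCompact_univ.elim_finite_subcover
    (fun x : X => UniformSpace.ball x η₀)
    (fun x => UniformSpace.isOpen_ball x hopen)
    (fun x _ => Set.mem_iUnion.2 ⟨x, refl_mem_uniformity hη₀⟩)
  have hpick : ∀ z : X, ∃ c ∈ t, z ∈ UniformSpace.ball c η₀ := by
    intro z
    have := ht (Set.mem_univ z)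
    simpa using this
  choose c hc1 hc2 using hpick
  refine ⟨Fintype.card (Fin n → {x // x ∈ t}), ?_⟩
  rintro m ⟨E, hEΛ, hsep, rfl⟩
  have hinj : Set.InjOn (fun x : X => fun j : Fin n => (⟨c (itr f 0 j.1 x), hc1 _⟩ :
      {x // x ∈ t})) ↑E := by
    intro x hx y hy hxy
    by_contra hne
    obtain ⟨j, hj, hnot⟩ := hsep x hx y hy hne
    apply hnot
    have hcc : c (itr f 0 j x) = c (itr f 0 j y) := by
      have := congrFun hxy ⟨j, hj⟩
      exact Subtype.ext_iff.1 this
    have h1 : (c (itr f 0 j x), itr f 0 j x) ∈ η₀ := hc2 _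
    have h2 : (c (itr f 0 j x), itr f 0 j y) ∈ η₀ := hcc ▸ hc2 _
    have h1' : (itr f 0 j x, c (itr f 0 j x)) ∈ η₀ := hsym.symm _ _ h1
    exact hcomp (SetRel.prodMk_mem_comp h1' h2)
  calc E.card ≤ (Finset.univ : Finset (Fin n → {x // x ∈ t})).card :=
        Finset.card_le_card_of_injOn _ (fun _ _ => Finset.mem_univ _) hinj
    _ = Fintype.card (Fin n → {x // x ∈ t}) := Finset.card_univ

private lemma logdiv_mono {m k : ℕ} (hmk : m ≤ k) (n : ℕ) :
    ((Real.log m / n : ℝ) : EReal) ≤ ((Real.log k / n : ℝ) : EReal) := by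
  have hlog : Real.log m ≤ Real.log k := by
    rcases Nat.eq_zero_or_pos m with rfl | hm
    · simpa using Real.log_natCast_nonneg k
    · exact Real.log_le_log (by exact_mod_cast hm) (by exact_mod_cast hmk)
  rcases Nat.eq_zero_or_pos n with rfl | hn
  · simp
  · have : (0 : ℝ) < n := by exact_mod_cast hn
    exact EReal.coe_le_coe_iff.2 ((div_le_div_iff_of_pos_right this).2 hlog)

private lemma main_le {X Y : Type*} [UniformSpace X] [CompactSpace X] [UniformSpace Y]
    (f : ℕ → X → X) (g : ℕ → Y → Y) (Λ : ℕ → Set X)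
    (hΛinv : ∀ n, f n '' Λ n ⊆ Λ (n + 1)) (D : ℕ → Set Y) (h : ℕ → X → Y)
    (hsurj : ∀ n, Set.SurjOn (h n) (Λ n) (D n))
    (hsemi : ∀ n, ∀ x ∈ Λ n, h (n + 1) (f n x) = g n (h n x))
    (hequi : ∀ γ ∈ 𝓤 Y, SetRel.IsSymm γ → IsOpen γ → ∃ η ∈ 𝓤 X, SetRel.IsSymm η ∧
      IsOpen η ∧ ∀ n, ∀ x ∈ Λ n, ∀ y ∈ Λ n, (x, y) ∈ η → (h n x, h n y) ∈ γ) :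
    entropy g (D 0) ≤ entropy f (Λ 0) := by
  classical
  refine iSup₂_le fun γ hγ => ?_
  obtain ⟨γ', ⟨hγ'mem, hγ'open, hγ'sym⟩, hγ'sub⟩ :=
    uniformity_hasBasis_open_symmetric.mem_iff.mp hγ
  obtain ⟨η, hη, hηsym, hηopen, hηprop⟩ := hequi γ' hγ'mem hγ'sym hγ'open
  have hsep_card : ∀ n, sepCard g (D 0) n γ ≤ sepCard f (Λ 0) n η := by
    intro n
    apply csSup_le_csSup (sep_bdd f (Λ 0) n η hη)
    · exact ⟨0, ∅, by simp, by intro x hx; simp at hx, rfl⟩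
    · rintro m ⟨E, hED, hsep, rfl⟩
      have hch : ∀ y : {y // y ∈ E}, ∃ x ∈ Λ 0, h 0 x = (y : Y) :=
        fun y => hsurj 0 (hED (Finset.mem_coe.mpr y.2))
      choose pick hpickΛ hpickh using hch
      have hpickinj : ∀ a b : {y // y ∈ E}, pick a = pick b → a = b := by
        intro a b hab
        apply Subtype.ext
        rw [← hpickh a, ← hpickh b, hab]
      refine ⟨E.attach.image pick, ?_, ?_, ?_⟩
      · intro x hx
        simp only [Finset.coe_image, Set.mem_image] at hx
        obtain ⟨a, _, rfl⟩ := hx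
        exact hpickΛ a
      · intro x hx y hy hxy
        simp only [Finset.coe_image, Set.mem_image, Finset.mem_coe, Finset.mem_attach] at hx hy
        obtain ⟨a, -, rfl⟩ := hx
        obtain ⟨b, -, rfl⟩ := hy
        have hab : (a : Y) ≠ (b : Y) := by
          intro hab
          exact hxy (congrArg pick (Subtype.ext hab))
        obtain ⟨j, hj, hnot⟩ := hsep a (Finset.mem_coe.mpr a.2) b (Finset.mem_coe.mpr b.2) hab
        refine ⟨j, hj, fun hmemη => hnot ?_⟩
        have := hηprop j _ (itr_mem f Λ hΛinv (hpickΛ a) j) _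
          (itr_mem f Λ hΛinv (hpickΛ b) j) hmemη
        rw [itr_semiconj f g Λ hΛinv h hsemi (hpickΛ a) j,
          itr_semiconj f g Λ hΛinv h hsemi (hpickΛ b) j, hpickh a, hpickh b] at this
        exact hγ'sub this
      · rw [Finset.card_image_of_injective _ hpickinj, Finset.card_attach]
  have hpt : ∀ n : ℕ, ((Real.log (sepCard g (D 0) n γ) / n : ℝ) : EReal) ≤
      ((Real.log (sepCard f (Λ 0) n η) / n : ℝ) : EReal) :=
    fun n => logdiv_mono (hsep_card n) n
  calc (atTop.limsup fun n : ℕ => ((Real.log (sepCard g (D 0) n γ) / n : ℝ) : EReal))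
      ≤ atTop.limsup fun n : ℕ => ((Real.log (sepCard f (Λ 0) n η) / n : ℝ) : EReal) :=
        Filter.limsup_le_limsup (Filter.Eventually.of_forall hpt)
    _ ≤ entropy f (Λ 0) := le_iSup₂ (f := fun η (_ : η ∈ 𝓤 X) => atTop.limsup
        fun n : ℕ => ((Real.log (sepCard f (Λ 0) n η) / n : ℝ) : EReal)) η hη

private lemma entropy_empty {X : Type*} [UniformSpace X] (f : ℕ → X → X) :
    entropy f (∅ : Set X) = 0 := by
  have hsep : ∀ n γ, sepCard f (∅ : Set X) n γ = 0 := by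
    intro n γ
    have : {m | ∃ E : Finset X, ↑E ⊆ (∅ : Set X) ∧ IsSep f n γ ↑E ∧ E.card = m} = {0} := by
      ext m
      constructor
      · rintro ⟨E, hE, -, rfl⟩
        have : E = ∅ := Finset.coe_eq_empty.mp (Set.subset_empty_iff.mp hE)
        simp [this]
      · rintro rfl
        exact ⟨∅, by simp, by intro x hx; simp at hx, rfl⟩
    rw [sepCard, this, csSup_singleton]
  have hlim : ∀ γ : Set (X × X), (atTop.limsup fun n : ℕ =>
      ((Real.log (sepCard f (∅ : Set X) n γ) / n : ℝ) : EReal)) = 0 := by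
    intro γ
    have : (fun n : ℕ => ((Real.log (sepCard f (∅ : Set X) n γ) / n : ℝ) : EReal)) =
        fun _ : ℕ => (0 : EReal) := by
      funext n
      rw [hsep]
      simp
    rw [this, Filter.limsup_const]
  refine le_antisymm (iSup₂_le fun γ _ => le_of_eq (hlim γ)) ?_
  have := le_iSup₂ (f := fun γ (_ : γ ∈ 𝓤 X) => atTop.limsup
      fun n : ℕ => ((Real.log (sepCard f (∅ : Set X) n γ) / n : ℝ) : EReal))
    Set.univ Filter.univ_mem
  rw [hlim] at this
  exact this

/-- Entropy and topological equi-semiconjugacy: if the invariant subsystem of `f_{0,∞}` on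
`{Λ_n}` is topologically `{h_n}`-equi-semiconjugate to the invariant subsystem of
`g_{0,∞}` on `{D_n}`, then `h(f_{0,∞}, Λ_0) ≥ h(g_{0,∞}, D_0)`; consequently if
moreover the `h_n` are injective on `Λ_n` with `{h_n⁻¹}` equi-continuous (topological
equi-conjugacy), the entropies are equal. -/
theorem entropy_equi_semiconjugacy {X Y : Type*} [UniformSpace X] [CompactSpace X]
    [UniformSpace Y] [CompactSpace Y]
    (f : ℕ → X → X) (hf : ∀ n, Continuous (f n))
    (g : ℕ → Y → Y) (hg : ∀ n, Continuous (g n))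
    (Λ : ℕ → Set X) (hΛinv : ∀ n, f n '' Λ n ⊆ Λ (n + 1))
    (D : ℕ → Set Y) (hDinv : ∀ n, g n '' D n ⊆ D (n + 1))
    (h : ℕ → X → Y)
    (hmaps : ∀ n, Set.MapsTo (h n) (Λ n) (D n))
    (hsurj : ∀ n, Set.SurjOn (h n) (Λ n) (D n))
    (hsemi : ∀ n, ∀ x ∈ Λ n, h (n + 1) (f n x) = g n (h n x))
    (hequi : ∀ γ ∈ 𝓤 Y, SetRel.IsSymm γ → IsOpen γ → ∃ η ∈ 𝓤 X, SetRel.IsSymm η ∧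
      IsOpen η ∧ ∀ n, ∀ x ∈ Λ n, ∀ y ∈ Λ n, (x, y) ∈ η → (h n x, h n y) ∈ γ) :
    entropy g (D 0) ≤ entropy f (Λ 0) ∧
      ((∀ n, Set.InjOn (h n) (Λ n)) →
        (∀ γ ∈ 𝓤 X, SetRel.IsSymm γ → IsOpen γ → ∃ η ∈ 𝓤 Y, SetRel.IsSymm η ∧
          IsOpen η ∧ ∀ n, ∀ x ∈ Λ n, ∀ y ∈ Λ n, (h n x, h n y) ∈ η → (x, y) ∈ γ) →
        entropy g (D 0) = entropy f (Λ 0)) := by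
  have hle := main_le f g Λ hΛinv D h hsurj hsemi hequi
  refine ⟨hle, fun hinj hinvequi => ?_⟩
  by_cases hX : Nonempty X
  · haveI := hX
    set h' : ℕ → Y → X := fun n => Function.invFunOn (h n) (Λ n) with hh'
    have hkey : ∀ n, ∀ y ∈ D n, h' n y ∈ Λ n ∧ h n (h' n y) = y := by
      intro n y hy
      obtain ⟨x, hx, hxy⟩ := hsurj n hy
      exact ⟨Function.invFunOn_mem ⟨x, hx, hxy⟩, Function.invFunOn_eq ⟨x, hx, hxy⟩⟩
    have hmaps' : ∀ n, Set.MapsTo (h' n) (D n) (Λ n) := fun n y hy => (hkey n y hy).1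
    have hsurj' : ∀ n, Set.SurjOn (h' n) (D n) (Λ n) := by
      intro n x hx
      have hy : h n x ∈ D n := hmaps n hx
      obtain ⟨hmem, heq⟩ := hkey n (h n x) hy
      exact ⟨h n x, hy, hinj n hmem hx heq⟩
    have hsemi' : ∀ n, ∀ y ∈ D n, h' (n + 1) (g n y) = f n (h' n y) := by
      intro n y hy
      obtain ⟨hx, hxy⟩ := hkey n y hy
      have h1 : f n (h' n y) ∈ Λ (n + 1) := hΛinv n ⟨h' n y, hx, rfl⟩
      have h2 : h (n + 1) (f n (h' n y)) = g n y := by rw [hsemi n _ hx, hxy]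
      obtain ⟨hx', hxy'⟩ := hkey (n + 1) (g n y) (hDinv n ⟨y, hy, rfl⟩)
      exact hinj (n + 1) hx' h1 (by rw [hxy', h2])
    have hequi' : ∀ γ ∈ 𝓤 X, SetRel.IsSymm γ → IsOpen γ → ∃ η ∈ 𝓤 Y, SetRel.IsSymm η ∧
        IsOpen η ∧ ∀ n, ∀ u ∈ D n, ∀ v ∈ D n, (u, v) ∈ η → (h' n u, h' n v) ∈ γ := by
      intro γ hγ hs ho
      obtain ⟨η, hη, hηs, hηo, hprop⟩ := hinvequi γ hγ hs ho
      refine ⟨η, hη, hηs, hηo, fun n u hu v hv huv => ?_⟩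
      refine hprop n _ (hkey n u hu).1 _ (hkey n v hv).1 ?_
      rw [(hkey n u hu).2, (hkey n v hv).2]
      exact huv
    exact le_antisymm hle (main_le g f D hDinv Λ h' hsurj' hsemi' hequi')
  · haveI : IsEmpty X := not_nonempty_iff.1 hX
    have hΛ0 : Λ 0 = ∅ := Set.eq_empty_of_isEmpty _
    have hD0 : D 0 = ∅ := by
      have h1 := hsurj 0
      rw [hΛ0] at h1
      simpa [Set.SurjOn, Set.subset_empty_iff] using h1
    rw [hΛ0, hD0, entropy_empty, entropy_empty]
end

section
/- Let X be a compact uniform space with uniformity 𝒰, R an equivalence relation on X such that for every γ ∈ 𝒰 there is η ∈ 𝒰 with η ∘ R ∘ η ⊂ R ∘ γ ∘ R, ξ : X → X/R the quotient map, 𝒰/R the quotient uniformity, and 𝒰^R the uniformity on X with base {R ∘ γ ∘ R : γ ∈ 𝒰}. Let f_{0,∞} be a sequence of continuous self-maps of (X,𝒰) and s_{0,∞} a sequence of self-maps of X/R with s_n ∘ ξ = ξ ∘ f_n for all n. Then h(f_{0,∞}, 𝒰^R) ≤ h(s_{0,∞}, 𝒰/R) ≤ h(f_{0,∞}, 𝒰).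 -/
open Filter Set
open scoped Uniformity

/-- Entropy of a nonautonomous system with respect to an explicitly given filter of
entourages (allowing to compare several uniformities on the same set). -/
noncomputable def entropyU {X : Type*} (𝔉 : Filter (X × X)) (f : ℕ → X → X) (Λ : Set X) :
    EReal :=
  ⨆ γ ∈ 𝔉, atTop.limsup fun n : ℕ =>
    ((Real.log (sepCard f Λ n γ) / n : ℝ) : EReal)


private lemma itr_cont {X : Type*} [TopologicalSpace X] (f : ℕ → X → X)
    (hf : ∀ n, Continuous (f n)) (j : ℕ) : Continuous (itr f 0 j) := by
  induction j with
  | zero => exact continuous_id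
  | succ n ih => exact (hf (0 + n)).comp ih

private lemma itr_mk {X : Type*} (R : Setoid X) (f : ℕ → X → X)
    (s : ℕ → Quotient R → Quotient R)
    (hs : ∀ n, ∀ x : X, s n (Quotient.mk R x) = Quotient.mk R (f n x)) (j : ℕ) (x : X) :
    itr s 0 j (Quotient.mk R x) = Quotient.mk R (itr f 0 j x) := by
  induction j with
  | zero => rfl
  | succ n ih =>
    show s (0 + n) (itr s 0 n (Quotient.mk R x)) = Quotient.mk R (f (0 + n) (itr f 0 n x))
    rw [ih, hs]

private lemma sep_bound {X : Type*} [UniformSpace X] [CompactSpace X]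
    (f : ℕ → X → X) (hf : ∀ n, Continuous (f n)) {β γ₀ : Set (X × X)}
    (hγ₀ : γ₀ ∈ 𝓤 X) (hsub : γ₀ ⊆ β) (n : ℕ) :
    ∃ N : ℕ, ∀ E : Finset X, IsSep f n β ↑E → E.card ≤ N := by
  obtain ⟨δ, hδ, hδo, hδs, hδc⟩ := comp_open_symm_mem_uniformity_sets hγ₀
  set W : X → Set X := fun p => ⋂ j ∈ Finset.range n, {x | (itr f 0 j p, itr f 0 j x) ∈ δ}
    with hW
  have hWmem : ∀ p x, x ∈ W p ↔ ∀ j < n, (itr f 0 j p, itr f 0 j x) ∈ δ := by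
    intro p x; simp [hW]
  have hWopen : ∀ p, IsOpen (W p) := by
    intro p
    apply isOpen_biInter_finset
    intro j _
    exact hδo.preimage ((continuous_const.prodMk (itr_cont f hf j)) :
      Continuous fun x => (itr f 0 j p, itr f 0 j x))
  have hcover : (univ : Set X) ⊆ ⋃ p, W p := fun x _ =>
    mem_iUnion.2 ⟨x, (hWmem x x).2 fun j _ => refl_mem_uniformity hδ⟩
  obtain ⟨T, hT⟩ := isCompact_univ.elim_finite_subcover W hWopen hcover
  refine ⟨T.card, fun E hE => ?_⟩
  have hchoice : ∀ x : X, ∃ p, p ∈ T ∧ x ∈ W p := by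
    intro x
    have := hT (mem_univ x)
    simpa using this
  choose g hgT hgW using hchoice
  refine Finset.card_le_card_of_injOn g (fun x _ => hgT x) ?_
  intro x hx y hy hxy
  by_contra hne
  obtain ⟨j, hj, hsep⟩ := hE x hx y hy hne
  apply hsep
  apply hsub
  apply hδc
  refine ⟨itr f 0 j (g x), hδs.symm _ _ ((hWmem (g x) x).1 (hgW x) j hj), ?_⟩
  have h2 : (itr f 0 j (g y), itr f 0 j y) ∈ δ := (hWmem (g y) y).1 (hgW y) j hj
  rwa [← hxy] at h2

private lemma sepCard_le_of_map {X Y : Type*} (f : ℕ → X → X) (g : ℕ → Y → Y)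
    (n : ℕ) (γ : Set (X × X)) (δ : Set (Y × Y)) (N : ℕ)
    (hbdd : ∀ F : Finset Y, IsSep g n δ ↑F → F.card ≤ N)
    (h : ∀ E : Finset X, IsSep f n γ ↑E → ∃ F : Finset Y, IsSep g n δ ↑F ∧ F.card = E.card) :
    sSup {m | ∃ E : Finset X, ↑E ⊆ (univ : Set X) ∧ IsSep f n γ ↑E ∧ E.card = m} ≤
      sSup {m | ∃ F : Finset Y, ↑F ⊆ (univ : Set Y) ∧ IsSep g n δ ↑F ∧ F.card = m} := by
  apply csSup_le
  · refine ⟨0, ∅, by simp, ?_, by simp⟩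
    intro x hx
    simp at hx
  · rintro m ⟨E, -, hE, rfl⟩
    obtain ⟨F, hF, hcard⟩ := h E hE
    have hb : BddAbove {m | ∃ F : Finset Y, ↑F ⊆ (univ : Set Y) ∧ IsSep g n δ ↑F ∧ F.card = m} := by
      refine ⟨N, ?_⟩
      rintro m ⟨F', -, hF', rfl⟩
      exact hbdd F' hF'
    exact le_csSup hb ⟨F, subset_univ _, hF, hcard⟩

private lemma lift_sep {X : Type*} (R : Setoid X) (f : ℕ → X → X)
    (s : ℕ → Quotient R → Quotient R)
    (hs : ∀ n, ∀ x : X, s n (Quotient.mk R x) = Quotient.mk R (f n x))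
    (n : ℕ) {γ : Set (X × X)} {δ : Set (Quotient R × Quotient R)}
    (hγδ : ∀ p : X × X, p ∈ γ → (Quotient.mk R p.1, Quotient.mk R p.2) ∈ δ)
    (E' : Finset (Quotient R)) (hE' : IsSep s n δ ↑E') :
    ∃ E : Finset X, IsSep f n γ ↑E ∧ E.card = E'.card := by
  classical
  refine ⟨E'.image Quotient.out, ?_, Finset.card_image_of_injective _ Quotient.out_injective⟩
  intro x hx y hy hne
  simp only [Finset.coe_image, Set.mem_image, Finset.mem_coe] at hx hy
  obtain ⟨x', hx', rfl⟩ := hx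
  obtain ⟨y', hy', rfl⟩ := hy
  obtain ⟨j, hj, hsep⟩ := hE' x' hx' y' hy' (fun h => hne (h ▸ rfl))
  refine ⟨j, hj, fun hmem => hsep ?_⟩
  have h1 : itr s 0 j x' = Quotient.mk R (itr f 0 j x'.out) := by
    rw [← itr_mk R f s hs j x'.out, Quotient.out_eq]
  have h2 : itr s 0 j y' = Quotient.mk R (itr f 0 j y'.out) := by
    rw [← itr_mk R f s hs j y'.out, Quotient.out_eq]
  rw [h1, h2]
  exact hγδ _ hmem

private lemma log_div_mono {a b : ℕ} (h : a ≤ b) (n : ℕ) :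
    ((Real.log a / n : ℝ) : EReal) ≤ ((Real.log b / n : ℝ) : EReal) := by
  apply EReal.coe_le_coe_iff.2
  apply div_le_div_of_nonneg_right ?_ (Nat.cast_nonneg n)
  rcases Nat.eq_zero_or_pos a with rfl | ha
  · simpa using Real.log_natCast_nonneg b
  · exact Real.log_le_log (by exact_mod_cast ha) (by exact_mod_cast h)

private lemma push_sep (R : Setoid X) (f : ℕ → X → X)
    (s : ℕ → Quotient R → Quotient R)
    (hs : ∀ n, ∀ x : X, s n (Quotient.mk R x) = Quotient.mk R (f n x))
    (n : ℕ) {γ : Set (X × X)} (hγrefl : ∀ x : X, (x, x) ∈ γ)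
    (E : Finset X)
    (hE : IsSep f n (SetRel.comp {p : X × X | R.r p.1 p.2}
      (SetRel.comp γ {p : X × X | R.r p.1 p.2})) ↑E) :
    ∃ F : Finset (Quotient R),
      IsSep s n (Prod.map (Quotient.mk R) (Quotient.mk R) '' γ) ↑F ∧ F.card = E.card := by
  classical
  have hinj : Set.InjOn (Quotient.mk R) ↑E := by
    intro x hx y hy hxy
    by_contra hne
    obtain ⟨j, hj, hsep⟩ := hE x hx y hy hne
    apply hsep
    refine ⟨itr f 0 j x, R.refl _, itr f 0 j x, hγrefl _, ?_⟩
    show R.r (itr f 0 j x) (itr f 0 j y)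
    have : Quotient.mk R (itr f 0 j x) = Quotient.mk R (itr f 0 j y) := by
      rw [← itr_mk R f s hs, ← itr_mk R f s hs, hxy]
    exact Quotient.exact this
  refine ⟨E.image (Quotient.mk R), ?_, Finset.card_image_of_injOn hinj⟩
  intro x' hx' y' hy' hne'
  simp only [Finset.coe_image, Set.mem_image, Finset.mem_coe] at hx' hy'
  obtain ⟨x, hx, rfl⟩ := hx'
  obtain ⟨y, hy, rfl⟩ := hy'
  obtain ⟨j, hj, hsep⟩ := hE x hx y hy (fun h => hne' (h ▸ rfl))
  refine ⟨j, hj, fun hmem => hsep ?_⟩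
  rw [itr_mk R f s hs, itr_mk R f s hs] at hmem
  obtain ⟨⟨a, b⟩, habγ, hab⟩ := hmem
  obtain ⟨ha, hb⟩ := Prod.mk.injEq .. ▸ hab
  refine ⟨a, ?_, b, habγ, ?_⟩
  · exact R.symm (Quotient.exact ha)
  · exact Quotient.exact hb

/-- Entropy of a quotient system: if `R` is a compatible equivalence relation on the
compact uniform space `(X, 𝒰)`, `ξ : X → X/R` the quotient map, and `s_{0,∞}` a sequence
of self-maps of `X/R` with `s_n ∘ ξ = ξ ∘ f_n`, then
`h(f_{0,∞}, 𝒰^R) ≤ h(s_{0,∞}, 𝒰/R) ≤ h(f_{0,∞}, 𝒰)`, where `𝒰/R` is the quotient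
uniformity and `𝒰^R` is the uniformity on `X` with base `{R ∘ γ ∘ R : γ ∈ 𝒰}`. -/
theorem entropy_quotient {X : Type*} [UniformSpace X] [CompactSpace X]
    (R : Setoid X)
    (hR : ∀ γ ∈ 𝓤 X, ∃ η ∈ 𝓤 X,
      SetRel.comp η (SetRel.comp {p : X × X | R.r p.1 p.2} η) ⊆
        SetRel.comp {p : X × X | R.r p.1 p.2} (SetRel.comp γ {p : X × X | R.r p.1 p.2}))
    (f : ℕ → X → X) (hf : ∀ n, Continuous (f n))
    (s : ℕ → Quotient R → Quotient R)
    (hs : ∀ n, ∀ x : X, s n (Quotient.mk R x) = Quotient.mk R (f n x)) :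
    entropyU ((𝓤 X).lift' fun γ =>
        SetRel.comp {p : X × X | R.r p.1 p.2} (SetRel.comp γ {p : X × X | R.r p.1 p.2}))
      f Set.univ ≤
      entropyU (Filter.map (Prod.map (Quotient.mk R) (Quotient.mk R)) (𝓤 X)) s Set.univ ∧
    entropyU (Filter.map (Prod.map (Quotient.mk R) (Quotient.mk R)) (𝓤 X)) s Set.univ ≤
      entropyU (𝓤 X) f Set.univ := by
  constructor
  · -- h(f, 𝒰^R) ≤ h(s, 𝒰/R)
    apply iSup₂_le
    intro γ' hγ'
    rw [mem_lift'_sets (by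
      intro a b hab
      exact SetRel.comp_subset_comp le_rfl (SetRel.comp_subset_comp hab le_rfl))] at hγ'
    obtain ⟨γ₀, hγ₀, hsub⟩ := hγ'
    set δ : Set (Quotient R × Quotient R) :=
      Prod.map (Quotient.mk R) (Quotient.mk R) '' γ₀ with hδdef
    have hδmem : δ ∈ Filter.map (Prod.map (Quotient.mk R) (Quotient.mk R)) (𝓤 X) :=
      mem_map.2 (mem_of_superset hγ₀ (subset_preimage_image _ _))
    refine le_trans ?_ (le_iSup₂_of_le δ hδmem le_rfl)
    apply limsup_le_limsup (Eventually.of_forall ?_)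
    intro n
    apply log_div_mono _ n
    -- sepCard f univ n γ' ≤ sepCard s univ n δ
    obtain ⟨N, hN⟩ := sep_bound f hf hγ₀ (le_refl γ₀) n
    apply sepCard_le_of_map f s n γ' δ N
    · intro F hF
      obtain ⟨E, hE, hcard⟩ := lift_sep R f s hs n
        (γ := γ₀) (δ := δ) (fun p hp => ⟨p, hp, rfl⟩) F hF
      exact hcard ▸ hN E hE
    · intro E hE
      apply push_sep R f s hs n (fun x => refl_mem_uniformity hγ₀) E
      intro x hx y hy hne
      obtain ⟨j, hj, hsep⟩ := hE x hx y hy hne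
      exact ⟨j, hj, fun hmem => hsep (hsub hmem)⟩
  · -- h(s, 𝒰/R) ≤ h(f, 𝒰)
    apply iSup₂_le
    intro γ' hγ'
    rw [mem_map] at hγ'
    set γ : Set (X × X) := Prod.map (Quotient.mk R) (Quotient.mk R) ⁻¹' γ' with hγdef
    refine le_trans ?_ (le_iSup₂_of_le γ hγ' le_rfl)
    apply limsup_le_limsup (Eventually.of_forall ?_)
    intro n
    apply log_div_mono _ n
    obtain ⟨N, hN⟩ := sep_bound f hf hγ' (le_refl γ) n
    apply sepCard_le_of_map s f n γ' γ N
    · exact hN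
    · exact lift_sep R f s hs n (γ := γ) (fun p hp => hp)
end
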